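/- (Membership criterion) Let A be a commutative ring, T ⊆ A a weakly divisible archimedean semiring (0,1 ∈ T, T+T ⊆ T, T·T ⊆ T, ℤ+T = A, and 1/r ∈ T for some integer r ≥ 2 invertible in A), and a ∈ A. Suppose φ(a) ≥ 0 for every ring homomorphism φ : A → ℝ with φ(T) ⊆ [0,∞), and there is an identity a = b₁t₁ + ⋯ + b_m t_m with bᵢ ∈ A, tᵢ ∈ T, such that φ(bᵢ) > 0 for all i and all ring homomorphisms φ : A → ℝ with φ(T) ⊆ [0,∞) and φ(a) = 0. Then a ∈ T. -/

import Mathlib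

namespace MCaux

structure Semir (A : Type*) [CommRing A] where
  T : Set A
  h0 : (0:A) ∈ T
  h1 : (1:A) ∈ T
  hadd : ∀ x ∈ T, ∀ y ∈ T, x + y ∈ T
  hmul : ∀ x ∈ T, ∀ y ∈ T, x * y ∈ T
  harch : ∀ a : A, ∃ n : ℤ, ∃ t ∈ T, a = (n : A) + t
  r : ℕ
  hr2 : 2 ≤ r
  u : A
  hru : (r : A) * u = 1
  huT : u ∈ T

variable {A : Type*} [CommRing A] (S : Semir A)

theorem Semir.natT : ∀ n : ℕ, ((n:A)) ∈ S.T := by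
  intro n
  induction n with
  | zero => simpa using S.h0
  | succ k ih => push_cast; exact S.hadd _ ih _ S.h1

theorem Semir.intT {k : ℤ} (hk : 0 ≤ k) : ((k:A)) ∈ S.T := by
  lift k to ℕ using hk
  push_cast; exact S.natT _

theorem Semir.boundAbove (x : A) : ∃ n : ℕ, ((n:A)) - x ∈ S.T := by
  obtain ⟨k, τ, hτ, hx⟩ := S.harch (-x)
  refine ⟨(-k).toNat, ?_⟩
  have h1 : ((-k).toNat : ℤ) + k ≥ 0 := by
    rcases le_or_gt 0 (-k) with h | h
    · rw [Int.toNat_of_nonneg h]; omega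
    · omega
  have h2 : (( (((-k).toNat : ℤ) + k : ℤ) : A)) ∈ S.T := S.intT h1
  have : ((((-k).toNat : ℕ)):A) - x = (((((-k).toNat : ℤ) + k : ℤ)) : A) + τ := by
    have : -x = (k:A) + τ := hx
    push_cast
    linear_combination this
  rw [this]
  exact S.hadd _ h2 _ hτ

theorem Semir.upowT (k : ℕ) : S.u ^ k ∈ S.T := by
  induction k with
  | zero => simpa using S.h1
  | succ n ih => rw [pow_succ]; exact S.hmul _ ih _ S.huT

theorem Semir.rupow (k : ℕ) : ((S.r : A))^k * S.u^k = 1 := by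
  induction k with
  | zero => simp
  | succ n ih =>
    rw [pow_succ, pow_succ]
    calc (S.r:A)^n * (S.r:A) * (S.u^n * S.u) = ((S.r:A)^n * S.u^n) * ((S.r:A) * S.u) := by ring
    _ = 1 := by rw [ih, S.hru]; ring

theorem Semir.dyT (m k : ℕ) : ((m:A) * S.u^k) ∈ S.T :=
  S.hmul _ (S.natT m) _ (S.upowT k)

theorem Semir.boundAboveR (x : A) : ∃ e : ℕ, ((S.r:A)^e) - x ∈ S.T := by
  obtain ⟨n, hn⟩ := S.boundAbove x
  refine ⟨n, ?_⟩
  have hr2 := S.hr2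
  have hlt : n < S.r ^ n := Nat.lt_pow_self (by omega)
  have h2 : (((S.r ^ n - n : ℕ)) : A) ∈ S.T := S.natT _
  have heq : ((S.r:A)^n) - x = ((S.r ^ n - n : ℕ) : A) + ((n:A) - x) := by
    rw [Nat.cast_sub (le_of_lt hlt)]; push_cast; ring
  rw [heq]
  exact S.hadd _ h2 _ hn

theorem Semir.boundBothR (x : A) : ∃ e : ℕ, ((S.r:A)^e) - x ∈ S.T ∧ ((S.r:A)^e) + x ∈ S.T := by
  obtain ⟨e1, h1⟩ := S.boundAboveR x
  obtain ⟨e2, h2⟩ := S.boundAboveR (-x)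
  refine ⟨e1 + e2, ?_, ?_⟩
  · have hpow : (((S.r ^ (e1+e2) - S.r ^ e1 : ℕ)) : A) ∈ S.T := S.natT _
    have hle : S.r ^ e1 ≤ S.r ^ (e1 + e2) := Nat.pow_le_pow_right (by have := S.hr2; omega) (by omega)
    have heq : ((S.r:A)^(e1+e2)) - x = ((S.r ^ (e1+e2) - S.r ^ e1 : ℕ) : A) + (((S.r:A)^e1) - x) := by
      rw [Nat.cast_sub hle]; push_cast; ring
    rw [heq]; exact S.hadd _ hpow _ h1
  · have hpow : (((S.r ^ (e1+e2) - S.r ^ e2 : ℕ)) : A) ∈ S.T := S.natT _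
    have hle : S.r ^ e2 ≤ S.r ^ (e1 + e2) := Nat.pow_le_pow_right (by have := S.hr2; omega) (by omega)
    have heq : ((S.r:A)^(e1+e2)) + x = ((S.r ^ (e1+e2) - S.r ^ e2 : ℕ) : A) + (((S.r:A)^e2) - (-x)) := by
      rw [Nat.cast_sub hle]; push_cast; ring
    rw [heq]; exact S.hadd _ hpow _ h2

end MCaux

namespace MCaux

variable {A : Type*} [CommRing A]

theorem Semir.sumT (S : Semir A) {ι : Type*} (s : Finset ι) (f : ι → A)
    (h : ∀ i ∈ s, f i ∈ S.T) : (∑ i ∈ s, f i) ∈ S.T :=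
  Finset.sum_induction f (· ∈ S.T) (fun a b ha hb => S.hadd a ha b hb) S.h0 h

theorem Semir.boundLift (S : Semir A) {e e' : ℕ} (hee : e ≤ e') {x : A}
    (h : ((S.r:A)^e) - x ∈ S.T) : ((S.r:A)^e') - x ∈ S.T := by
  have hle : S.r ^ e ≤ S.r ^ e' := Nat.pow_le_pow_right (by have := S.hr2; omega) hee
  have heq : ((S.r:A)^e') - x = ((S.r ^ e' - S.r ^ e : ℕ) : A) + (((S.r:A)^e) - x) := by
    rw [Nat.cast_sub hle]; push_cast; ring
  rw [heq]; exact S.hadd _ (S.natT _) _ h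

structure Mctx (A : Type*) [CommRing A] extends Semir A where
  mm : ℕ
  t : Fin mm → A
  ht : ∀ i, t i ∈ T
  a : A

variable (C : Mctx A)

def Mctx.tt : A := ∑ i, C.t i

def Mctx.V : Set A := {x | ∃ c : Fin C.mm → A, x = ∑ i, c i * C.t i}

def Mctx.M : Set A := {x | ∃ c : Fin C.mm → A, (∀ i, c i ∈ C.T) ∧ x = ∑ i, c i * C.t i}

theorem Mctx.M_sub_V : C.M ⊆ C.V := fun x ⟨c, _, hx⟩ => ⟨c, hx⟩

theorem Mctx.M_sub_T : C.M ⊆ C.T := by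
  rintro x ⟨c, hc, rfl⟩
  exact C.toSemir.sumT _ _ (fun i _ => C.hmul _ (hc i) _ (C.ht i))

theorem Mctx.tt_M : C.tt ∈ C.M :=
  ⟨fun _ => 1, fun _ => C.h1, by simp [Mctx.tt]⟩

theorem Mctx.ti_M (i : Fin C.mm) : C.t i ∈ C.M := by
  refine ⟨fun j => if j = i then 1 else 0, fun j => ?_, ?_⟩
  · by_cases h : j = i <;> simp [h, C.h1, C.h0]
  · rw [Finset.sum_eq_single i] <;> simp +contextual

theorem Mctx.zero_M : (0:A) ∈ C.M := ⟨fun _ => 0, fun _ => C.h0, by simp⟩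

theorem Mctx.zero_V : (0:A) ∈ C.V := C.M_sub_V C.zero_M

theorem Mctx.V_add {x y : A} (hx : x ∈ C.V) (hy : y ∈ C.V) : x + y ∈ C.V := by
  obtain ⟨c, rfl⟩ := hx; obtain ⟨d, rfl⟩ := hy
  exact ⟨fun i => c i + d i, by rw [← Finset.sum_add_distrib]; congr 1; ext i; ring⟩

theorem Mctx.V_neg {x : A} (hx : x ∈ C.V) : -x ∈ C.V := by
  obtain ⟨c, rfl⟩ := hx
  exact ⟨fun i => -(c i), by rw [← Finset.sum_neg_distrib]; congr 1; ext i; ring⟩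

theorem Mctx.V_mulA (y : A) {x : A} (hx : x ∈ C.V) : y * x ∈ C.V := by
  obtain ⟨c, rfl⟩ := hx
  exact ⟨fun i => y * c i, by rw [Finset.mul_sum]; congr 1; ext i; ring⟩

theorem Mctx.V_sub {x y : A} (hx : x ∈ C.V) (hy : y ∈ C.V) : x - y ∈ C.V := by
  rw [sub_eq_add_neg]; exact C.V_add hx (C.V_neg hy)

theorem Mctx.M_add {x y : A} (hx : x ∈ C.M) (hy : y ∈ C.M) : x + y ∈ C.M := by
  obtain ⟨c, hc, rfl⟩ := hx; obtain ⟨d, hd, rfl⟩ := hy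
  exact ⟨fun i => c i + d i, fun i => C.hadd _ (hc i) _ (hd i),
    by rw [← Finset.sum_add_distrib]; congr 1; ext i; ring⟩

theorem Mctx.M_smulT {s x : A} (hs : s ∈ C.T) (hx : x ∈ C.M) : s * x ∈ C.M := by
  obtain ⟨c, hc, rfl⟩ := hx
  exact ⟨fun i => s * c i, fun i => C.hmul _ hs _ (hc i),
    by rw [Finset.mul_sum]; congr 1; ext i; ring⟩

theorem Mctx.orderUnit {x : A} (hx : x ∈ C.V) :
    ∃ e : ℕ, ((C.r:A)^e * C.tt - x ∈ C.M ∧ (C.r:A)^e * C.tt + x ∈ C.M) := by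
  obtain ⟨c, rfl⟩ := hx
  choose e he using fun i => C.toSemir.boundBothR (c i)
  refine ⟨Finset.univ.sup e, ?_, ?_⟩
  · refine ⟨fun i => (C.r:A)^(Finset.univ.sup e) - c i, fun i => ?_, ?_⟩
    · exact C.toSemir.boundLift (Finset.le_sup (Finset.mem_univ i)) (he i).1
    · rw [Mctx.tt, Finset.mul_sum, ← Finset.sum_sub_distrib]
      congr 1; ext i; ring
  · refine ⟨fun i => (C.r:A)^(Finset.univ.sup e) + c i, fun i => ?_, ?_⟩
    · have h2 : (C.r:A)^(e i) - (- c i) ∈ C.T := by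
        have heq2 : (C.r:A)^(e i) - (- c i) = (C.r:A)^(e i) + c i := by ring
        rw [heq2]; exact (he i).2
      have := C.toSemir.boundLift (Finset.le_sup (f := e) (Finset.mem_univ i)) h2
      show (C.r:A)^(Finset.univ.sup e) + c i ∈ C.T
      have heq : (C.r:A)^(Finset.univ.sup e) + c i = (C.r:A)^(Finset.univ.sup e) - (- c i) := by ring
      rw [heq]; exact this
    · rw [Mctx.tt, Finset.mul_sum, ← Finset.sum_add_distrib]
      congr 1; ext i; ring

end MCaux

namespace MCaux

variable {A : Type*} [CommRing A]

theorem Semir.powT (S : Semir A) {x : A} (hx : x ∈ S.T) (n : ℕ) : x^n ∈ S.T := by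
  induction n with
  | zero => simpa using S.h1
  | succ k ih => rw [pow_succ]; exact S.hmul _ ih _ hx

/-- The geometric-series division trick: if `σ * a ≥ p * tt` in the module order
(for a positive dyadic `p`), then `a ∈ M`. -/
theorem Mctx.series (C : Mctx A) {σ : A} (hσ : σ ∈ C.T) (mp kp : ℕ) (hmp : 1 ≤ mp)
    (hμ : σ * C.a - ((mp:A) * C.u^kp) * C.tt ∈ C.M) (haV : C.a ∈ C.V) : C.a ∈ C.M := by
  obtain ⟨ea, _, hea⟩ := C.orderUnit haV
  obtain ⟨E, hE⟩ := C.toSemir.boundAboveR σ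
  set dy : A := (mp:A) * C.u^kp with hdy
  set Q : A := ((C.r:A)^E - σ) * C.u^E with hQ
  have hQT : Q ∈ C.T := C.hmul _ hE _ (C.upowT E)
  have key1 : σ * C.u^E = 1 - Q := by
    have := C.toSemir.rupow E
    rw [hQ]; linear_combination this
  set SQ : ℕ → A := fun n => ∑ j ∈ Finset.range n, Q^j with hSQ
  have tele : ∀ n, SQ n * (1 - Q) = 1 - Q^n := by
    intro n
    have := geom_sum_mul Q n
    rw [hSQ]; linear_combination -this
  have hSQT : ∀ n, SQ n ∈ C.T := by
    intro n
    exact C.toSemir.sumT _ _ (fun j _ => C.toSemir.powT hQT j)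
  set k : ℕ := C.r^(ea + kp + E) with hk
  have hkk : C.r^(ea + kp + E) ≤ mp * k := by
    calc C.r^(ea+kp+E) = 1 * k := by rw [hk]; ring
    _ ≤ mp * k := by exact Nat.mul_le_mul_right _ hmp
  -- first coefficient is in T
  have hc1 : dy * C.u^E * (SQ k - (k:A) * Q^k) ∈ C.T := by
    refine C.hmul _ (C.hmul _ (C.toSemir.dyT mp kp) _ (C.upowT E)) _ ?_
    have heq : SQ k - (k:A) * Q^k = ∑ j ∈ Finset.range k, (Q^j - Q^k) := by
      rw [Finset.sum_sub_distrib, Finset.sum_const, Finset.card_range, hSQ]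
      simp [nsmul_eq_mul]
    rw [heq]
    refine C.toSemir.sumT _ _ (fun j hj => ?_)
    have hjk : j ≤ k := le_of_lt (Finset.mem_range.mp hj)
    have hQjk : Q^j - Q^k = Q^j * (SQ (k - j) * (σ * C.u^E)) := by
      rw [key1, tele (k - j)]
      have : Q^j * Q^(k-j) = Q^k := by rw [← pow_add]; congr 1; omega
      linear_combination this
    rw [hQjk]
    exact C.hmul _ (C.toSemir.powT hQT j) _ (C.hmul _ (hSQT _) _ (C.hmul _ hσ _ (C.upowT E)))
  have hc2 : ((mp * k : ℕ):A) * C.u^(kp+E) - (C.r:A)^ea ∈ C.T := by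
    have heq : ((mp * k : ℕ):A) * C.u^(kp+E) - (C.r:A)^ea
        = (((mp * k - C.r^(ea+kp+E) : ℕ)):A) * C.u^(kp+E) := by
      rw [Nat.cast_sub hkk]
      have hr : (C.r:A)^(ea+kp+E) * C.u^(kp+E) = (C.r:A)^ea := by
        have h4 := C.toSemir.rupow (kp+E)
        have h3 : (C.r:A)^(ea+kp+E) = (C.r:A)^ea * (C.r:A)^(kp+E) := by
          rw [← pow_add]; congr 1; omega
        rw [h3, mul_assoc, h4, mul_one]
      push_cast
      linear_combination hr
    rw [heq]
    exact C.toSemir.dyT _ _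
  -- main decomposition
  have main : C.a = (dy * C.u^E * (SQ k - (k:A) * Q^k) + (((mp * k : ℕ):A) * C.u^(kp+E) - (C.r:A)^ea) * Q^k) * C.tt
      + (C.u^E * SQ k) * (σ * C.a - dy * C.tt)
      + Q^k * ((C.r:A)^ea * C.tt + C.a) := by
    have h1 : dy * C.u^E * (k:A) = ((mp * k : ℕ):A) * C.u^(kp+E) := by
      rw [hdy]; push_cast; ring
    have h2 := tele k
    -- a - [ ... ] = 0
    linear_combination (Q^k * C.tt) * h1 + (-(SQ k * C.a)) * key1 + (-(C.a)) * h2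
  rw [main]
  refine C.M_add (C.M_add ?_ ?_) ?_
  · exact C.M_smulT (C.hadd _ hc1 _ (C.hmul _ hc2 _ (C.toSemir.powT hQT k))) C.tt_M
  · exact C.M_smulT (C.hmul _ (C.upowT E) _ (hSQT k)) hμ
  · exact C.M_smulT (C.toSemir.powT hQT k) hea

end MCaux

namespace MCaux

variable {A : Type*} [CommRing A] (C : Mctx A)

/-- The exclusion family: elements `σ * a - p * tt` with `σ ∈ T` and `p` a positive dyadic. -/
def Mctx.Good (N : Set A) : Prop :=
  C.M ⊆ N ∧ N ⊆ C.V ∧ (∀ x ∈ N, ∀ y ∈ N, x + y ∈ N) ∧ (∀ s ∈ C.T, ∀ x ∈ N, s * x ∈ N) ∧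
  ∀ σ ∈ C.T, ∀ mp kp : ℕ, 1 ≤ mp → σ * C.a - ((mp:A) * C.u^kp) * C.tt ∉ N

theorem Mctx.good_zorn {N₀ : Set A} (h₀ : C.Good N₀) :
    ∃ N, N₀ ⊆ N ∧ Maximal C.Good N := by
  apply zorn_subset_nonempty (setOf C.Good) _ N₀ h₀
  intro c hc hchain hne
  obtain ⟨N1, hN1⟩ := hne
  refine ⟨⋃₀ c, ⟨?_, ?_, ?_, ?_, ?_⟩, fun s hs => Set.subset_sUnion_of_mem hs⟩
  · exact (hc hN1).1.trans (Set.subset_sUnion_of_mem hN1)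
  · rintro x ⟨N, hN, hx⟩; exact (hc hN).2.1 hx
  · rintro x ⟨N, hN, hx⟩ y ⟨N', hN', hy⟩
    rcases hchain.total hN hN' with h | h
    · exact Set.subset_sUnion_of_mem hN' ((hc hN').2.2.1 x (h hx) y hy)
    · exact Set.subset_sUnion_of_mem hN ((hc hN).2.2.1 x hx y (h hy))
  · rintro s hs x ⟨N, hN, hx⟩
    exact Set.subset_sUnion_of_mem hN ((hc hN).2.2.2.1 s hs x hx)
  · rintro σ hσ mp kp hmp ⟨N, hN, hx⟩
    exact (hc hN).2.2.2.2 σ hσ mp kp hmp hx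

theorem Mctx.totality {N : Set A} (hmax : Maximal C.Good N) (haV : C.a ∈ C.V)
    {x : A} (hx : x ∈ C.V) : x ∈ N ∨ -x ∈ N := by
  have hG := hmax.1
  obtain ⟨hMN, hNV, hNadd, hNsmul, hexcl⟩ := hG
  by_contra hcon
  push_neg at hcon
  obtain ⟨hx1, hx2⟩ := hcon
  have h0N : (0:A) ∈ N := hMN C.zero_M
  -- the two extensions
  have hext : ∀ z : A, z ∈ C.V → (z ∉ N) →
      ∃ σ ∈ C.T, ∃ mp kp : ℕ, 1 ≤ mp ∧ ∃ m₁ ∈ N, ∃ s₁ ∈ C.T,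
        σ * C.a - ((mp:A) * C.u^kp) * C.tt = m₁ + s₁ * z := by
    intro z hzV hzN
    set N' : Set A := {w | ∃ y ∈ N, ∃ s ∈ C.T, w = y + s * z} with hN'
    have hNsub : N ⊆ N' := fun y hy => ⟨y, hy, 0, C.h0, by ring⟩
    have hzN' : z ∈ N' := ⟨0, h0N, 1, C.h1, by ring⟩
    have hgood4 : C.M ⊆ N' ∧ N' ⊆ C.V ∧ (∀ x ∈ N', ∀ y ∈ N', x + y ∈ N') ∧
        (∀ s ∈ C.T, ∀ x ∈ N', s * x ∈ N') := by
      refine ⟨fun m hm => hNsub (hMN hm), ?_, ?_, ?_⟩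
      · rintro w ⟨y, hy, s, hs, rfl⟩
        exact C.V_add (hNV hy) (C.V_mulA s hzV)
      · rintro w ⟨y, hy, s, hs, rfl⟩ w' ⟨y', hy', s', hs', rfl⟩
        exact ⟨y + y', hNadd _ hy _ hy', s + s', C.hadd _ hs _ hs', by ring⟩
      · rintro s hs w ⟨y, hy, s', hs', rfl⟩
        exact ⟨s * y, hNsmul s hs y hy, s * s', C.hmul _ hs _ hs', by ring⟩
    have hnotgood : ¬ C.Good N' := by
      intro hgood
      exact hzN (hmax.2 hgood hNsub hzN')
    have : ∃ σ ∈ C.T, ∃ mp kp : ℕ, 1 ≤ mp ∧ σ * C.a - ((mp:A) * C.u^kp) * C.tt ∈ N' := by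
      by_contra hno
      push_neg at hno
      exact hnotgood ⟨hgood4.1, hgood4.2.1, hgood4.2.2.1, hgood4.2.2.2,
        fun σ hσ mp kp hmp => hno σ hσ mp kp hmp⟩
    obtain ⟨σ, hσ, mp, kp, hmp, y, hy, s, hs, heq⟩ := this
    exact ⟨σ, hσ, mp, kp, hmp, y, hy, s, hs, heq⟩
  obtain ⟨σ₁, hσ₁, mq₁, kq₁, hmq₁, m₁, hm₁, s₁, hs₁, eq₁⟩ := hext x hx hx1
  obtain ⟨σ₂, hσ₂, mq₂, kq₂, hmq₂, m₂, hm₂, s₂, hs₂, eq₂⟩ := hext (-x) (C.V_neg hx) hx2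
  obtain ⟨e, heu1, heu2⟩ := C.orderUnit hx
  set ν : A := (C.r:A)^e with hν
  have hνT : ν ∈ C.T := C.toSemir.powT (C.natT C.r) e
  set q1 : A := (mq₁:A) * C.u^kq₁ with hq1
  set q2 : A := (mq₂:A) * C.u^kq₂ with hq2
  have hq1T : q1 ∈ C.T := C.toSemir.dyT _ _
  have hq2T : q2 ∈ C.T := C.toSemir.dyT _ _
  set Z : A := ν * (s₂ * m₁ + s₁ * m₂) + q1 * (m₂ + s₂ * (ν * C.tt - x))
      + q2 * (m₁ + s₁ * (ν * C.tt + x)) with hZ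
  have hZN : Z ∈ N := by
    refine hNadd _ (hNadd _ ?_ _ ?_) _ ?_
    · exact hNsmul _ hνT _ (hNadd _ (hNsmul _ hs₂ _ hm₁) _ (hNsmul _ hs₁ _ hm₂))
    · exact hNsmul _ hq1T _ (hNadd _ hm₂ _ (hNsmul _ hs₂ _ (hMN heu1)))
    · exact hNsmul _ hq2T _ (hNadd _ hm₁ _ (hNsmul _ hs₁ _ (hMN heu2)))
  have hZid : Z = (ν * (s₂ * σ₁ + s₁ * σ₂) + q1 * σ₂ + q2 * σ₁) * C.a
      - (((2 * mq₁ * mq₂ : ℕ)):A) * C.u^(kq₁ + kq₂) * C.tt := by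
    have hqq : (((2 * mq₁ * mq₂ : ℕ)):A) * C.u^(kq₁ + kq₂) = 2 * q1 * q2 := by
      rw [hq1, hq2, pow_add]; push_cast; ring
    rw [hqq]
    linear_combination (-(ν * s₂ + q2)) * eq₁ + (-(ν * s₁ + q1)) * eq₂
  have hσ₃T : ν * (s₂ * σ₁ + s₁ * σ₂) + q1 * σ₂ + q2 * σ₁ ∈ C.T := by
    refine C.hadd _ (C.hadd _ (C.hmul _ hνT _ (C.hadd _ (C.hmul _ hs₂ _ hσ₁) _ (C.hmul _ hs₁ _ hσ₂))) _
      (C.hmul _ hq1T _ hσ₂)) _ (C.hmul _ hq2T _ hσ₁)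
  have := hexcl _ hσ₃T (2 * mq₁ * mq₂) (kq₁ + kq₂) (Nat.mul_pos (Nat.mul_pos (by norm_num) hmq₁) hmq₂)
  rw [← hZid] at this
  exact this hZN

end MCaux

namespace MCaux

variable {A : Type*} [CommRing A] (C : Mctx A)

theorem Mctx.rposR : (0:ℝ) < (C.r:ℝ) := by
  have := C.hr2; positivity

theorem Mctx.zdyshift (mz : ℤ) (k j : ℕ) :
    (mz:A) * C.u^k = ((mz * (C.r:ℤ)^j : ℤ):A) * C.u^(k+j) := by
  have h := C.toSemir.rupow j
  rw [pow_add]; push_cast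
  linear_combination ((mz:A) * C.u^k) * h.symm

theorem Mctx.zdysub (m1 m2 : ℤ) (k1 k2 : ℕ) :
    (m1:A) * C.u^k1 - (m2:A) * C.u^k2
      = ((m1 * (C.r:ℤ)^k2 - m2 * (C.r:ℤ)^k1 : ℤ):A) * C.u^(k1+k2) := by
  rw [C.zdyshift m1 k1 k2, C.zdyshift m2 k2 k1]
  push_cast
  have : k2 + k1 = k1 + k2 := by omega
  rw [this]; ring

theorem Mctx.dyle (m1 m2 : ℤ) (k1 k2 : ℕ) :
    (m1:ℝ)/(C.r:ℝ)^k1 ≤ (m2:ℝ)/(C.r:ℝ)^k2 ↔ m1 * (C.r:ℤ)^k2 ≤ m2 * (C.r:ℤ)^k1 := by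
  have hrp := C.rposR
  rw [div_le_div_iff₀ (by positivity) (by positivity)]
  constructor <;> intro h <;> exact_mod_cast h

theorem Mctx.dylt (m1 m2 : ℤ) (k1 k2 : ℕ) :
    (m1:ℝ)/(C.r:ℝ)^k1 < (m2:ℝ)/(C.r:ℝ)^k2 ↔ m1 * (C.r:ℤ)^k2 < m2 * (C.r:ℤ)^k1 := by
  have hrp := C.rposR
  rw [div_lt_div_iff₀ (by positivity) (by positivity)]
  constructor <;> intro h <;> exact_mod_cast h

theorem Mctx.dydense {x y : ℝ} (hxy : x < y) :
    ∃ (mz : ℤ) (kz : ℕ), x < (mz:ℝ)/(C.r:ℝ)^kz ∧ (mz:ℝ)/(C.r:ℝ)^kz < y := by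
  have hr1 : (1:ℝ) < (C.r:ℝ) := by
    have := C.hr2
    exact_mod_cast (by omega : (1:ℕ) < C.r)
  obtain ⟨kz, hkz⟩ := pow_unbounded_of_one_lt (1 / (y - x)) hr1
  have hrp := C.rposR
  have hpow : (0:ℝ) < (C.r:ℝ)^kz := by positivity
  refine ⟨⌊x * (C.r:ℝ)^kz⌋ + 1, kz, ?_, ?_⟩
  · rw [lt_div_iff₀ hpow]
    push_cast
    exact Int.lt_floor_add_one _
  · rw [div_lt_iff₀ hpow]
    have h1 : (⌊x * (C.r:ℝ)^kz⌋ : ℝ) ≤ x * (C.r:ℝ)^kz := Int.floor_le _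
    have h2 : 1 < (y - x) * (C.r:ℝ)^kz := by
      rw [div_lt_iff₀ (by linarith)] at hkz
      linarith
    push_cast
    nlinarith

end MCaux

namespace MCaux

variable {A : Type*} [CommRing A] (C : Mctx A)

def Mctx.cutSet (N : Set A) (x : A) : Set ℝ :=
  {z | ∃ (mz : ℤ) (kz : ℕ), z = (mz:ℝ)/(C.r:ℝ)^kz ∧ (mz:A) * C.u^kz * C.tt - x ∈ N}

noncomputable def Mctx.phi (N : Set A) (x : A) : ℝ := sInf (C.cutSet N x)

variable {N : Set A}

theorem Mctx.negdy (hmax : Maximal C.Good N) (mz : ℤ) (kz : ℕ) (hmz : mz < 0)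
    (h : (mz:A) * C.u^kz * C.tt ∈ N) : False := by
  have hexcl := hmax.1.2.2.2.2
  refine hexcl 0 C.h0 (-mz).toNat kz (by omega) ?_
  have hcast : (((-mz).toNat:ℕ):A) = ((-mz : ℤ):A) := by
    rw [← Int.cast_natCast (R := A), Int.toNat_of_nonneg (by omega)]
  have heq : (0:A) * C.a - (((-mz).toNat:ℕ):A) * C.u^kz * C.tt = (mz:A) * C.u^kz * C.tt := by
    rw [hcast]; push_cast; ring
  rw [heq]; exact h

theorem Mctx.cutSet_nonempty (hmax : Maximal C.Good N) {x : A} (hx : x ∈ C.V) :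
    (C.cutSet N x).Nonempty := by
  obtain ⟨e, he, _⟩ := C.orderUnit hx
  refine ⟨((C.r:ℤ)^e : ℤ) / (C.r:ℝ)^(0:ℕ), (C.r:ℤ)^e, 0, by norm_num, ?_⟩
  have heq : (((C.r:ℤ)^e : ℤ):A) * C.u^(0:ℕ) * C.tt - x = (C.r:A)^e * C.tt - x := by
    push_cast; ring
  rw [heq]; exact hmax.1.1 he

theorem Mctx.cutSet_bddBelow (hmax : Maximal C.Good N) {x : A} (hx : x ∈ C.V) :
    BddBelow (C.cutSet N x) := by
  obtain ⟨e, _, he⟩ := C.orderUnit hx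
  refine ⟨-((C.r:ℝ)^e), ?_⟩
  rintro z ⟨mz, kz, rfl, hmem⟩
  by_contra hlt
  push_neg at hlt
  have hrp := C.rposR
  have hm : mz + (C.r:ℤ)^(e+kz) < 0 := by
    have h2 : (mz:ℝ)/(C.r:ℝ)^kz < ((-((C.r:ℤ)^e) : ℤ):ℝ) / (C.r:ℝ)^(0:ℕ) := by
      push_cast; simpa using hlt
    have h5 := (C.dylt mz (-((C.r:ℤ)^e)) kz 0).mp h2
    simp only [pow_zero, mul_one] at h5
    have h3 : (C.r:ℤ)^(e+kz) = (C.r:ℤ)^e * (C.r:ℤ)^kz := by rw [pow_add]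
    nlinarith [h5]
  have hsum : ((mz + (C.r:ℤ)^(e+kz) : ℤ):A) * C.u^kz * C.tt ∈ N := by
    have h4 := C.toSemir.rupow kz
    have heq : ((mz + (C.r:ℤ)^(e+kz) : ℤ):A) * C.u^kz * C.tt
        = ((mz:A) * C.u^kz * C.tt - x) + ((C.r:A)^e * C.tt + x) := by
      push_cast [pow_add]
      linear_combination ((C.r:A)^e * C.tt) * h4
    rw [heq]
    exact hmax.1.2.2.1 _ hmem _ (hmax.1.1 he)
  exact C.negdy hmax _ _ hm hsum

theorem Mctx.cutSet_upward (hmax : Maximal C.Good N) {x : A} {m1 m2 : ℤ} {k1 k2 : ℕ}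
    (hmem : (m1:A) * C.u^k1 * C.tt - x ∈ N)
    (hle : (m1:ℝ)/(C.r:ℝ)^k1 ≤ (m2:ℝ)/(C.r:ℝ)^k2) :
    (m2:A) * C.u^k2 * C.tt - x ∈ N := by
  have hw := (C.dyle m1 m2 k1 k2).mp hle
  have hw0 : 0 ≤ m2 * (C.r:ℤ)^k1 - m1 * (C.r:ℤ)^k2 := sub_nonneg.mpr hw
  have hds := C.zdysub m2 m1 k2 k1
  have hcast : (((m2 * (C.r:ℤ)^k1 - m1 * (C.r:ℤ)^k2).toNat:ℕ):A)
      = ((m2 * (C.r:ℤ)^k1 - m1 * (C.r:ℤ)^k2 : ℤ):A) := by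
    rw [← Int.cast_natCast (R := A), Int.toNat_of_nonneg hw0]
  have heq : (m2:A) * C.u^k2 * C.tt - x
      = ((m1:A) * C.u^k1 * C.tt - x)
        + (((m2 * (C.r:ℤ)^k1 - m1 * (C.r:ℤ)^k2).toNat:ℕ):A) * C.u^(k2+k1) * C.tt := by
    rw [hcast]
    linear_combination (C.tt) * hds
  rw [heq]
  exact hmax.1.2.2.1 _ hmem _ (hmax.1.1 (C.M_smulT (C.toSemir.dyT _ _) C.tt_M))

theorem Mctx.real_above (hmax : Maximal C.Good N) {x : A} (hx : x ∈ C.V) {m : ℤ} {k : ℕ}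
    (h : C.phi N x < (m:ℝ)/(C.r:ℝ)^k) : (m:A) * C.u^k * C.tt - x ∈ N := by
  obtain ⟨z, hz, hzlt⟩ := exists_lt_of_csInf_lt (C.cutSet_nonempty hmax hx) h
  obtain ⟨m1, k1, rfl, hmem⟩ := hz
  exact C.cutSet_upward hmax hmem (le_of_lt hzlt)

theorem Mctx.phi_le (hmax : Maximal C.Good N) {x : A} (hx : x ∈ C.V) {m : ℤ} {k : ℕ}
    (h : (m:A) * C.u^k * C.tt - x ∈ N) : C.phi N x ≤ (m:ℝ)/(C.r:ℝ)^k :=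
  csInf_le (C.cutSet_bddBelow hmax hx) ⟨m, k, rfl, h⟩

theorem Mctx.real_below (hmax : Maximal C.Good N) (haV : C.a ∈ C.V) {x : A} (hx : x ∈ C.V)
    {m : ℤ} {k : ℕ} (h : (m:ℝ)/(C.r:ℝ)^k < C.phi N x) :
    x - (m:A) * C.u^k * C.tt ∈ N := by
  have hnot : (m:A) * C.u^k * C.tt - x ∉ N := by
    intro hmem
    exact absurd (C.phi_le hmax hx hmem) (not_le.mpr h)
  have hV : (m:A) * C.u^k * C.tt - x ∈ C.V :=
    C.V_sub (C.V_mulA _ (C.M_sub_V C.tt_M)) hx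
  rcases C.totality hmax haV hV with hc | hc
  · exact absurd hc hnot
  · have heq : x - (m:A) * C.u^k * C.tt = -((m:A) * C.u^k * C.tt - x) := by ring
    rw [heq]; exact hc

end MCaux

namespace MCaux

variable {A : Type*} [CommRing A] (C : Mctx A) {N : Set A}

theorem Mctx.zdyadd (m1 m2 : ℤ) (k1 k2 : ℕ) :
    (m1:A) * C.u^k1 + (m2:A) * C.u^k2
      = ((m1 * (C.r:ℤ)^k2 + m2 * (C.r:ℤ)^k1 : ℤ):A) * C.u^(k1+k2) := by
  have h := C.zdysub m1 (-m2) k1 k2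
  push_cast at h ⊢
  linear_combination h

theorem Mctx.dyaddval (m1 m2 : ℤ) (k1 k2 : ℕ) :
    ((m1 * (C.r:ℤ)^k2 + m2 * (C.r:ℤ)^k1 : ℤ):ℝ)/(C.r:ℝ)^(k1+k2)
      = (m1:ℝ)/(C.r:ℝ)^k1 + (m2:ℝ)/(C.r:ℝ)^k2 := by
  have hrp := C.rposR
  rw [div_eq_iff (by positivity)]
  push_cast [pow_add]
  field_simp
  try ring

theorem Mctx.dysubval (m1 m2 : ℤ) (k1 k2 : ℕ) :
    ((m1 * (C.r:ℤ)^k2 - m2 * (C.r:ℤ)^k1 : ℤ):ℝ)/(C.r:ℝ)^(k1+k2)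
      = (m1:ℝ)/(C.r:ℝ)^k1 - (m2:ℝ)/(C.r:ℝ)^k2 := by
  have hrp := C.rposR
  rw [div_eq_iff (by positivity)]
  push_cast [pow_add]
  field_simp
  try ring

theorem Mctx.phi_add (hmax : Maximal C.Good N) (haV : C.a ∈ C.V) {x y : A}
    (hx : x ∈ C.V) (hy : y ∈ C.V) : C.phi N (x + y) = C.phi N x + C.phi N y := by
  have hxy : x + y ∈ C.V := C.V_add hx hy
  have hle : C.phi N (x+y) ≤ C.phi N x + C.phi N y := by
    by_contra hcon
    push_neg at hcon
    set ε : ℝ := C.phi N (x+y) - C.phi N x - C.phi N y with hε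
    have hε0 : 0 < ε := by simp [hε]; linarith
    obtain ⟨mp, kp, hp1, hp2⟩ := C.dydense (show C.phi N x < C.phi N x + ε/2 by linarith)
    obtain ⟨mq, kq, hq1, hq2⟩ := C.dydense (show C.phi N y < C.phi N y + ε/2 by linarith)
    have h1 := C.real_above hmax hx hp1
    have h2 := C.real_above hmax hy hq1
    have hsum : ((mp * (C.r:ℤ)^kq + mq * (C.r:ℤ)^kp : ℤ):A) * C.u^(kp+kq) * C.tt - (x+y) ∈ N := by
      have heq : ((mp * (C.r:ℤ)^kq + mq * (C.r:ℤ)^kp : ℤ):A) * C.u^(kp+kq) * C.tt - (x+y)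
          = ((mp:A) * C.u^kp * C.tt - x) + ((mq:A) * C.u^kq * C.tt - y) := by
        have := C.zdyadd mp mq kp kq
        linear_combination (C.tt) * this.symm
      rw [heq]
      exact hmax.1.2.2.1 _ h1 _ h2
    have := C.phi_le hmax hxy hsum
    rw [C.dyaddval] at this
    linarith
  have hge : C.phi N x + C.phi N y ≤ C.phi N (x+y) := by
    refine le_csInf (C.cutSet_nonempty hmax hxy) ?_
    rintro z ⟨mz, kz, rfl, hmem⟩
    by_contra hcon
    push_neg at hcon
    have : (mz:ℝ)/(C.r:ℝ)^kz - C.phi N y < C.phi N x := by linarith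
    obtain ⟨mq, kq, hq1, hq2⟩ := C.dydense this
    have h2 := C.real_below hmax haV hx hq2
    have hsum : ((mz * (C.r:ℤ)^kq - mq * (C.r:ℤ)^kz : ℤ):A) * C.u^(kz+kq) * C.tt - y ∈ N := by
      have heq : ((mz * (C.r:ℤ)^kq - mq * (C.r:ℤ)^kz : ℤ):A) * C.u^(kz+kq) * C.tt - y
          = ((mz:A) * C.u^kz * C.tt - (x+y)) + (x - (mq:A) * C.u^kq * C.tt) := by
        have := C.zdysub mz mq kz kq
        linear_combination (C.tt) * this.symm
      rw [heq]
      exact hmax.1.2.2.1 _ hmem _ h2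
    have h3 := C.phi_le hmax hy hsum
    rw [C.dysubval] at h3
    linarith
  linarith

theorem Mctx.phi_zero (hmax : Maximal C.Good N) : C.phi N 0 = 0 := by
  have hle : C.phi N 0 ≤ 0 := by
    have h : ((0:ℤ):A) * C.u^(0:ℕ) * C.tt - 0 ∈ N := by
      have : ((0:ℤ):A) * C.u^(0:ℕ) * C.tt - 0 = 0 := by push_cast; ring
      rw [this]; exact hmax.1.1 C.zero_M
    have := C.phi_le hmax C.zero_V h
    simpa using this
  have hge : 0 ≤ C.phi N 0 := by
    refine le_csInf (C.cutSet_nonempty hmax C.zero_V) ?_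
    rintro z ⟨mz, kz, rfl, hmem⟩
    rw [sub_zero] at hmem
    by_contra hcon
    push_neg at hcon
    have hrp := C.rposR
    have hmz : mz < 0 := by
      by_contra hmz
      push_neg at hmz
      have : (0:ℝ) ≤ (mz:ℝ)/(C.r:ℝ)^kz := by positivity
      linarith
    exact C.negdy hmax _ _ hmz hmem
  linarith

theorem Mctx.phi_neg (hmax : Maximal C.Good N) (haV : C.a ∈ C.V) {x : A} (hx : x ∈ C.V) :
    C.phi N (-x) = - C.phi N x := by
  have := C.phi_add hmax haV hx (C.V_neg hx)
  rw [add_neg_cancel, C.phi_zero hmax] at this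
  linarith

theorem Mctx.phi_natmul (hmax : Maximal C.Good N) (haV : C.a ∈ C.V) (n : ℕ) {x : A}
    (hx : x ∈ C.V) : C.phi N ((n:A) * x) = n * C.phi N x := by
  induction n with
  | zero => simpa using C.phi_zero hmax
  | succ k ih =>
    have heq : (((k+1:ℕ)):A) * x = (k:A) * x + x := by push_cast; ring
    rw [heq, C.phi_add hmax haV (C.V_mulA _ hx) hx, ih]
    push_cast; ring

theorem Mctx.phi_intmul (hmax : Maximal C.Good N) (haV : C.a ∈ C.V) (n : ℤ) {x : A}
    (hx : x ∈ C.V) : C.phi N ((n:A) * x) = n * C.phi N x := by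
  rcases le_or_gt 0 n with h | h
  · lift n to ℕ using h
    push_cast
    exact C.phi_natmul hmax haV n hx
  · have heq : (n:A) * x = -(((-n).toNat:ℕ):A) * x := by
      have : (((-n).toNat:ℕ):A) = ((-n:ℤ):A) := by
        rw [← Int.cast_natCast (R := A), Int.toNat_of_nonneg (by omega)]
      rw [this]; push_cast; ring
    rw [heq]
    have h2 : -(((-n).toNat:ℕ):A) * x = -((((-n).toNat:ℕ):A) * x) := by ring
    rw [h2, C.phi_neg hmax haV (C.V_mulA _ hx), C.phi_natmul hmax haV _ hx]
    have : ((((-n).toNat:ℕ)):ℝ) = ((-n:ℤ):ℝ) := by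
      rw [← Int.cast_natCast (R := ℝ), Int.toNat_of_nonneg (by omega)]
    rw [this]; push_cast; ring

theorem Mctx.phi_tt (hmax : Maximal C.Good N) : C.phi N C.tt = 1 := by
  have hr0 : (C.r:ℝ) ≠ 0 := by have := C.rposR; linarith
  have hle : C.phi N C.tt ≤ 1 := by
    have h : (((C.r:ℕ):ℤ):A) * C.u^(1:ℕ) * C.tt - C.tt ∈ N := by
      have heq : (((C.r:ℕ):ℤ):A) * C.u^(1:ℕ) * C.tt - C.tt = 0 := by
        push_cast
        have := C.hru
        linear_combination C.tt * this
      rw [heq]; exact hmax.1.1 C.zero_M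
    have := C.phi_le hmax (C.M_sub_V C.tt_M) h
    rw [show ((((C.r:ℕ):ℤ)):ℝ)/(C.r:ℝ)^(1:ℕ) = 1 by push_cast; field_simp] at this
    exact this
  have hge : 1 ≤ C.phi N C.tt := by
    refine le_csInf (C.cutSet_nonempty hmax (C.M_sub_V C.tt_M)) ?_
    rintro z ⟨mz, kz, rfl, hmem⟩
    by_contra hcon
    push_neg at hcon
    have hrp := C.rposR
    have hr2 := C.hr2
    have hrkpos : (0:ℤ) < (C.r:ℤ)^kz := pow_pos (by exact_mod_cast (by omega : 0 < C.r)) kz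
    have hlt : mz - (C.r:ℤ)^kz < 0 := by
      have hne : ((C.r:ℝ)^kz) ≠ 0 := by positivity
      have h1 : (mz:ℝ)/(C.r:ℝ)^kz < (((C.r:ℤ)^kz:ℤ):ℝ)/(C.r:ℝ)^kz := by
        push_cast
        rw [div_self hne]
        exact hcon
      have h5 := (C.dylt mz ((C.r:ℤ)^kz) kz kz).mp h1
      nlinarith [h5, hrkpos]
    have hmem2 : ((mz - (C.r:ℤ)^kz : ℤ):A) * C.u^kz * C.tt ∈ N := by
      have h4 := C.toSemir.rupow kz
      have heq : ((mz - (C.r:ℤ)^kz : ℤ):A) * C.u^kz * C.tt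
          = (mz:A) * C.u^kz * C.tt - C.tt := by
        push_cast
        linear_combination (-C.tt) * h4
      rw [heq]; exact hmem
    exact C.negdy hmax _ _ hlt hmem2
  linarith

end MCaux

namespace MCaux

variable {A : Type*} [CommRing A] (C : Mctx A) {N : Set A}

theorem Mctx.phi_nonneg (hmax : Maximal C.Good N) {x : A} (hx : x ∈ N) :
    0 ≤ C.phi N x := by
  refine le_csInf (C.cutSet_nonempty hmax (hmax.1.2.1 hx)) ?_
  rintro z ⟨mz, kz, rfl, hmem⟩
  by_contra hcon
  push_neg at hcon
  have hrp := C.rposR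
  have hmz : mz < 0 := by
    by_contra hmz
    push_neg at hmz
    have : (0:ℝ) ≤ (mz:ℝ)/(C.r:ℝ)^kz := by positivity
    linarith
  have hmem2 : (mz:A) * C.u^kz * C.tt ∈ N := by
    have heq : (mz:A) * C.u^kz * C.tt = ((mz:A) * C.u^kz * C.tt - x) + x := by ring
    rw [heq]
    exact hmax.1.2.2.1 _ hmem _ hx
  exact C.negdy hmax _ _ hmz hmem2

theorem Mctx.phi_sub (hmax : Maximal C.Good N) (haV : C.a ∈ C.V) {x y : A}
    (hx : x ∈ C.V) (hy : y ∈ C.V) : C.phi N (x - y) = C.phi N x - C.phi N y := by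
  have h1 : x - y = x + (-y) := by ring
  rw [h1, C.phi_add hmax haV hx (C.V_neg hy), C.phi_neg hmax haV hy]
  ring

theorem Mctx.phi_a_nonpos (hmax : Maximal C.Good N) (haV : C.a ∈ C.V) :
    C.phi N C.a ≤ 0 := by
  by_contra hcon
  push_neg at hcon
  have hrp := C.rposR
  have hr1 : (1:ℝ) < (C.r:ℝ) := by
    have := C.hr2
    exact_mod_cast (by omega : (1:ℕ) < C.r)
  obtain ⟨k, hk⟩ := pow_unbounded_of_one_lt (1 / (C.phi N C.a)) hr1
  have hlt : ((1:ℤ):ℝ)/(C.r:ℝ)^k < C.phi N C.a := by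
    rw [div_lt_iff₀ (by positivity)] at hk ⊢
    push_cast
    nlinarith [hk, hcon]
  have hmem := C.real_below hmax haV haV hlt
  have hexcl := hmax.1.2.2.2.2 1 C.h1 1 k (le_refl 1)
  apply hexcl
  have heq : (1:A) * C.a - ((1:ℕ):A) * C.u^k * C.tt = C.a - ((1:ℤ):A) * C.u^k * C.tt := by
    push_cast; ring
  rw [heq]
  -- need the negation direction: we have a - u^k tt ∈ N, but exclusion says a - u^k tt ∉ N!
  exact hmem

theorem Mctx.phi_upow (hmax : Maximal C.Good N) (haV : C.a ∈ C.V) (k : ℕ) {x : A}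
    (hx : x ∈ C.V) : C.phi N (C.u^k * x) = C.phi N x / (C.r:ℝ)^k := by
  have hrp := C.rposR
  have heq : ((C.r^k : ℕ):A) * (C.u^k * x) = x := by
    push_cast
    have := C.toSemir.rupow k
    linear_combination x * this
  have h1 : C.phi N x = (C.r^k : ℕ) * C.phi N (C.u^k * x) := by
    conv_lhs => rw [← heq]
    exact C.phi_natmul hmax haV _ (C.V_mulA _ hx)
  rw [h1]
  push_cast
  field_simp

theorem Mctx.mult_le (hmax : Maximal C.Good N) (haV : C.a ∈ C.V) {s x : A}
    (hs : s ∈ C.T) (hx : x ∈ C.V) :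
    C.phi N (s * x) ≤ C.phi N (s * C.tt) * C.phi N x := by
  have hstt : s * C.tt ∈ N := hmax.1.1 (C.M_smulT hs C.tt_M)
  have hsttV : s * C.tt ∈ C.V := hmax.1.2.1 hstt
  set θ : ℝ := C.phi N (s * C.tt) with hθ
  have hθ0 : 0 ≤ θ := C.phi_nonneg hmax hstt
  have key : ∀ (mp : ℤ) (kp : ℕ), C.phi N x < (mp:ℝ)/(C.r:ℝ)^kp →
      C.phi N (s * x) ≤ ((mp:ℝ)/(C.r:ℝ)^kp) * θ := by
    intro mp kp hp
    have h1 := C.real_above hmax hx hp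
    have h2 : s * ((mp:A) * C.u^kp * C.tt - x) ∈ N := hmax.1.2.2.2.1 s hs _ h1
    have h3 : 0 ≤ C.phi N (s * ((mp:A) * C.u^kp * C.tt - x)) := C.phi_nonneg hmax h2
    have heq : s * ((mp:A) * C.u^kp * C.tt - x)
        = (mp:A) * (C.u^kp * (s * C.tt)) - s * x := by ring
    rw [heq] at h3
    have h4 : C.phi N ((mp:A) * (C.u^kp * (s * C.tt)) - s * x)
        = (mp:ℝ) * (θ / (C.r:ℝ)^kp) - C.phi N (s * x) := by
      rw [C.phi_sub hmax haV (C.V_mulA _ (C.V_mulA _ hsttV)) (C.V_mulA _ hx),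
        C.phi_intmul hmax haV _ (C.V_mulA _ hsttV), C.phi_upow hmax haV _ hsttV]
    rw [h4] at h3
    have : (mp:ℝ) * (θ / (C.r:ℝ)^kp) = ((mp:ℝ)/(C.r:ℝ)^kp) * θ := by ring
    linarith [h3, this.symm.le]
  by_contra hcon
  push_neg at hcon
  set ε : ℝ := C.phi N (s * x) - θ * C.phi N x with hε
  have hε0 : 0 < ε := by simp [hε]; linarith
  obtain ⟨mp, kp, hp1, hp2⟩ := C.dydense
    (show C.phi N x < C.phi N x + ε/(θ+1) by
      have : 0 < ε/(θ+1) := by positivity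
      linarith)
  have h5 := key mp kp hp1
  have h6 : ((mp:ℝ)/(C.r:ℝ)^kp) * θ < θ * C.phi N x + ε := by
    have hq : (mp:ℝ)/(C.r:ℝ)^kp < C.phi N x + ε/(θ+1) := hp2
    have hA : ((mp:ℝ)/(C.r:ℝ)^kp) * θ ≤ (C.phi N x + ε/(θ+1)) * θ :=
      mul_le_mul_of_nonneg_right hq.le hθ0
    have hB : (C.phi N x + ε/(θ+1)) * θ = θ * C.phi N x + ε * (θ/(θ+1)) := by
      field_simp
    have hC : θ/(θ+1) < 1 := by
      rw [div_lt_one (by linarith)]; linarith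
    have hD : ε * (θ/(θ+1)) < ε * 1 := by
      apply mul_lt_mul_of_pos_left hC hε0
    rw [hB] at hA
    nlinarith [hA, hD]
  simp only [hε] at h6
  linarith

theorem Mctx.mult_norm (hmax : Maximal C.Good N) (haV : C.a ∈ C.V) {s x : A}
    (hs : s ∈ C.T) (hs1 : 1 - s ∈ C.T) (hx : x ∈ C.V) :
    C.phi N (s * x) = C.phi N (s * C.tt) * C.phi N x := by
  have h1 := C.mult_le hmax haV hs hx
  have h2 := C.mult_le hmax haV hs1 hx
  have hsum : C.phi N (s * x) + C.phi N ((1-s) * x) = C.phi N x := by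
    have heq : s * x + (1-s) * x = x := by ring
    rw [← C.phi_add hmax haV (C.V_mulA _ hx) (C.V_mulA _ hx), heq]
  have hsumtt : C.phi N (s * C.tt) + C.phi N ((1-s) * C.tt) = 1 := by
    have httV : C.tt ∈ C.V := C.M_sub_V C.tt_M
    have heq : s * C.tt + (1-s) * C.tt = C.tt := by ring
    rw [← C.phi_add hmax haV (C.V_mulA _ httV) (C.V_mulA _ httV), heq, C.phi_tt hmax]
  have hb : C.phi N ((1-s) * C.tt) = 1 - C.phi N (s * C.tt) := by linarith
  rw [hb] at h2
  have hring : (1 - C.phi N (s * C.tt)) * C.phi N x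
      = C.phi N x - C.phi N (s * C.tt) * C.phi N x := by ring
  rw [hring] at h2
  linarith

theorem Mctx.mult_gen (hmax : Maximal C.Good N) (haV : C.a ∈ C.V) {s x : A}
    (hs : s ∈ C.T) (hx : x ∈ C.V) :
    C.phi N (s * x) = C.phi N (s * C.tt) * C.phi N x := by
  obtain ⟨e, he⟩ := C.toSemir.boundAboveR s
  have hs' : C.u^e * s ∈ C.T := C.hmul _ (C.upowT e) _ hs
  have hs1' : 1 - C.u^e * s ∈ C.T := by
    have heq : 1 - C.u^e * s = C.u^e * ((C.r:A)^e - s) := by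
      have := C.toSemir.rupow e
      linear_combination -this
    rw [heq]
    exact C.hmul _ (C.upowT e) _ he
  have hmain := C.mult_norm hmax haV hs' hs1' hx
  have hscale : ∀ y : A, y ∈ C.V → C.phi N (s * y) = (C.r^e : ℕ) * C.phi N ((C.u^e * s) * y) := by
    intro y hyV
    have heq : ((C.r^e : ℕ):A) * ((C.u^e * s) * y) = s * y := by
      push_cast
      have := C.toSemir.rupow e
      linear_combination (s*y) * this
    conv_lhs => rw [← heq]
    exact C.phi_natmul hmax haV _ (C.V_mulA _ hyV)
  have httV : C.tt ∈ C.V := C.M_sub_V C.tt_M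
  rw [hscale x hx, hscale C.tt httV, hmain]
  push_cast
  ring

theorem Mctx.mult_any (hmax : Maximal C.Good N) (haV : C.a ∈ C.V) (y : A) {x : A}
    (hx : x ∈ C.V) :
    C.phi N (y * x) = C.phi N (y * C.tt) * C.phi N x := by
  obtain ⟨n, s, hsT, hy⟩ := C.harch y
  have httV : C.tt ∈ C.V := C.M_sub_V C.tt_M
  have h1 : y * x = (n:A) * x + s * x := by rw [hy]; ring
  have h2 : y * C.tt = (n:A) * C.tt + s * C.tt := by rw [hy]; ring
  rw [h1, h2, C.phi_add hmax haV (C.V_mulA _ hx) (C.V_mulA _ hx),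
    C.phi_add hmax haV (C.V_mulA _ httV) (C.V_mulA _ httV),
    C.phi_intmul hmax haV _ hx, C.phi_intmul hmax haV _ httV,
    C.mult_gen hmax haV hsT hx, C.phi_tt hmax]
  ring

end MCaux

namespace MCaux

variable {A : Type*} [CommRing A] (C : Mctx A) {N : Set A}

theorem Mctx.V_sum {ι : Type*} (s : Finset ι) (f : ι → A) (hf : ∀ i ∈ s, f i ∈ C.V) :
    (∑ i ∈ s, f i) ∈ C.V := by
  classical
  induction s using Finset.cons_induction with
  | empty => simpa using C.zero_V
  | cons a s ha ih =>
    rw [Finset.sum_cons]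
    exact C.V_add (hf a (Finset.mem_cons_self a s)) (ih (fun i hi => hf i (Finset.mem_cons_of_mem hi)))

theorem Mctx.phi_fin_sum (hmax : Maximal C.Good N) (haV : C.a ∈ C.V) {ι : Type*}
    (s : Finset ι) (f : ι → A) (hf : ∀ i ∈ s, f i ∈ C.V) :
    C.phi N (∑ i ∈ s, f i) = ∑ i ∈ s, C.phi N (f i) := by
  classical
  induction s using Finset.cons_induction with
  | empty => simpa using C.phi_zero hmax
  | cons a s ha ih =>
    rw [Finset.sum_cons, Finset.sum_cons,
      C.phi_add hmax haV (hf a (Finset.mem_cons_self a s))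
        (C.V_sum s f (fun i hi => hf i (Finset.mem_cons_of_mem hi))),
      ih (fun i hi => hf i (Finset.mem_cons_of_mem hi))]

theorem Mctx.main (b : Fin C.mm → A) (hid : C.a = ∑ i, b i * C.t i)
    (hnn : ∀ φ : A →+* ℝ, (∀ s ∈ C.T, 0 ≤ φ s) → 0 ≤ φ C.a)
    (hbpos : ∀ φ : A →+* ℝ, (∀ s ∈ C.T, 0 ≤ φ s) → φ C.a = 0 → ∀ i, 0 < φ (b i)) :
    C.a ∈ C.T := by
  have haV : C.a ∈ C.V := ⟨b, hid⟩
  by_cases hbase : ∃ σ ∈ C.T, ∃ mp kp : ℕ, 1 ≤ mp ∧ σ * C.a - ((mp:A) * C.u^kp) * C.tt ∈ C.M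
  · obtain ⟨σ, hσ, mp, kp, hmp, hmem⟩ := hbase
    exact C.M_sub_T (C.series hσ mp kp hmp hmem haV)
  · push_neg at hbase
    have hgoodM : C.Good C.M :=
      ⟨subset_rfl, C.M_sub_V, fun x hx y hy => C.M_add hx hy, fun s hs x hx => C.M_smulT hs hx,
        fun σ hσ mp kp hmp => hbase σ hσ mp kp hmp⟩
    obtain ⟨N, hMN, hmax⟩ := C.good_zorn hgoodM
    exfalso
    have httV : C.tt ∈ C.V := C.M_sub_V C.tt_M
    have httT : C.tt ∈ C.T := C.M_sub_T C.tt_M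
    let ψ : A →+* ℝ :=
      { toFun := fun y => C.phi N (y * C.tt)
        map_one' := by show C.phi N ((1:A) * C.tt) = 1; rw [one_mul]; exact C.phi_tt hmax
        map_mul' := fun y z => by
          have h1 : y * z * C.tt = y * (z * C.tt) := by ring
          simp only [h1, C.mult_any hmax haV y (C.V_mulA z httV)]
        map_zero' := by show C.phi N ((0:A) * C.tt) = 0; rw [zero_mul]; exact C.phi_zero hmax
        map_add' := fun y z => by
          have h1 : (y + z) * C.tt = y * C.tt + z * C.tt := by ring
          simp only [h1]
          exact C.phi_add hmax haV (C.V_mulA y httV) (C.V_mulA z httV) }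
    have hψT : ∀ s ∈ C.T, 0 ≤ ψ s :=
      fun s hs => C.phi_nonneg hmax (hmax.1.1 (C.M_smulT hs C.tt_M))
    have hψa_le : ψ C.a ≤ 0 := by
      have h1 : ψ C.a = C.phi N (C.tt * C.a) := by
        show C.phi N (C.a * C.tt) = _
        rw [mul_comm]
      rw [h1, C.mult_gen hmax haV httT haV]
      have h2 : 0 ≤ C.phi N (C.tt * C.tt) :=
        C.phi_nonneg hmax (hmax.1.1 (C.M_smulT httT C.tt_M))
      exact mul_nonpos_of_nonneg_of_nonpos h2 (C.phi_a_nonpos hmax haV)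
    have hψa0 : ψ C.a = 0 := le_antisymm hψa_le (hnn ψ hψT)
    have hb := hbpos ψ hψT hψa0
    -- now compute phi a as a positive sum
    have hsum1 : C.phi N C.a = ∑ i, C.phi N (b i * C.t i) := by
      conv_lhs => rw [hid]
      exact C.phi_fin_sum hmax haV _ _ (fun i _ => C.V_mulA _ (C.M_sub_V (C.ti_M i)))
    have hsum2 : ∀ i, C.phi N (b i * C.t i) = ψ (b i) * C.phi N (C.t i) := by
      intro i
      exact C.mult_any hmax haV (b i) (C.M_sub_V (C.ti_M i))
    have hsumtt : ∑ i, C.phi N (C.t i) = 1 := by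
      rw [← C.phi_fin_sum hmax haV _ _ (fun i _ => C.M_sub_V (C.ti_M i))]
      exact C.phi_tt hmax
    have htnn : ∀ i, 0 ≤ C.phi N (C.t i) :=
      fun i => C.phi_nonneg hmax (hmax.1.1 (C.ti_M i))
    have hi0 : ∃ i : Fin C.mm, 0 < C.phi N (C.t i) := by
      by_contra hno
      push_neg at hno
      have : ∀ i : Fin C.mm, C.phi N (C.t i) = 0 :=
        fun i => le_antisymm (hno i) (htnn i)
      rw [Finset.sum_congr rfl (fun i _ => this i)] at hsumtt
      simp at hsumtt
    obtain ⟨i0, hi0⟩ := hi0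
    have hterm : 0 < ψ (b i0) * C.phi N (C.t i0) := mul_pos (hb i0) hi0
    have hpos : 0 < C.phi N C.a := by
      rw [hsum1, Finset.sum_congr rfl (fun i _ => hsum2 i)]
      calc 0 < ψ (b i0) * C.phi N (C.t i0) := hterm
      _ ≤ ∑ i, ψ (b i) * C.phi N (C.t i) := by
          refine Finset.single_le_sum (f := fun i => ψ (b i) * C.phi N (C.t i)) (fun i _ => ?_) (Finset.mem_univ i0)
          exact mul_nonneg (le_of_lt (hb i)) (htnn i)
    exact absurd (C.phi_a_nonpos hmax haV) (not_le.mpr hpos)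

end MCaux

theorem membership_criterion (A : Type*) [CommRing A] (T : Set A)
    (h0 : (0 : A) ∈ T) (h1 : (1 : A) ∈ T)
    (hadd : ∀ x ∈ T, ∀ y ∈ T, x + y ∈ T)
    (hmul : ∀ x ∈ T, ∀ y ∈ T, x * y ∈ T)
    (harch : ∀ a : A, ∃ n : ℤ, ∃ t ∈ T, a = (n : A) + t)
    (hdiv : ∃ r : ℕ, 2 ≤ r ∧ ∃ u : A, (r : A) * u = 1 ∧ u ∈ T)
    (a : A)
    (hnn : ∀ φ : A →+* ℝ, (∀ t ∈ T, 0 ≤ φ t) → 0 ≤ φ a)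
    (m : ℕ) (b t : Fin m → A) (ht : ∀ i, t i ∈ T)
    (hid : a = ∑ i, b i * t i)
    (hbpos : ∀ φ : A →+* ℝ, (∀ s ∈ T, 0 ≤ φ s) → φ a = 0 → ∀ i, 0 < φ (b i)) :
    a ∈ T := by
  obtain ⟨r, hr2, u, hru, huT⟩ := hdiv
  let C : MCaux.Mctx A :=
    ⟨⟨T, h0, h1, hadd, hmul, harch, r, hr2, u, hru, huT⟩, m, t, ht, a⟩
  exact C.main b hid hnn hbpos
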